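/- arXiv:1511.02467 — 4 statements merged into one kernel-verified Lean document; each statement's English description precedes it below -/
import Mathlib

section
/- Let I be a nonempty set, D an ultrafilter on I, (M i)_{i∈I} a family of monoids, and α i, β i congruences on M i for each i. For a family σ of congruences, let Π_D σ denote the congruence on Π_{i∈I} M i relating a, b iff {i | σ i (a i) (b i)} ∈ D. Then Π_D α = Π_D β if and only if {i ∈ I | α i = β i} ∈ D. -/
/-- The congruence `Π_D σ` on the direct product `Π i, M i`: it relates `a` and `b`
iff `{i | σ i (a i) (b i)} ∈ D`. -/
def prodCon {I : Type*} (D : Ultrafilter I) {M : I → Type*} [∀ i, Monoid (M i)]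
    (σ : ∀ i, Con (M i)) : Con (∀ i, M i) where
  r a b := {i | σ i (a i) (b i)} ∈ D
  iseqv := by
    refine ⟨fun a => ?_, fun h => ?_, fun h1 h2 => ?_⟩
    · exact Filter.mem_of_superset Filter.univ_mem fun i _ => (σ i).refl _
    · exact Filter.mem_of_superset h fun i hi => (σ i).symm hi
    · exact Filter.mem_of_superset (Filter.inter_mem h1 h2) fun i hi => (σ i).trans hi.1 hi.2
  mul' := fun h1 h2 =>
    Filter.mem_of_superset (Filter.inter_mem h1 h2) fun i hi => (σ i).mul hi.1 hi.2

/-- The ultraproduct congruence `D*` on the direct product `Π i, M i`: it relates `a` and `b`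
iff `{i | a i = b i} ∈ D`. -/
def ultraCon {I : Type*} (D : Ultrafilter I) (M : I → Type*) [∀ i, Monoid (M i)] :
    Con (∀ i, M i) where
  r a b := {i | a i = b i} ∈ D
  iseqv := by
    refine ⟨fun a => ?_, fun h => ?_, fun h1 h2 => ?_⟩
    · exact Filter.mem_of_superset Filter.univ_mem fun i _ => rfl
    · exact Filter.mem_of_superset h fun i hi => hi.symm
    · exact Filter.mem_of_superset (Filter.inter_mem h1 h2) fun i hi => hi.1.trans hi.2
  mul' := fun h1 h2 =>
    Filter.mem_of_superset (Filter.inter_mem h1 h2) fun i hi =>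
      show _ = _ by simp only [Pi.mul_apply, Set.mem_inter_iff, Set.mem_setOf_eq] at hi ⊢; rw [hi.1, hi.2]

lemma prodCon_ne_aux {I : Type*} (D : Ultrafilter I) {M : I → Type*} [∀ i, Monoid (M i)]
    (σ τ : ∀ i, Con (M i)) (hS : {i | ∃ x y, σ i x y ∧ ¬ τ i x y} ∈ D) :
    prodCon D σ ≠ prodCon D τ := by
  classical
  intro heq
  have hex : ∀ i, ∃ x y, (∃ u v, σ i u v ∧ ¬ τ i u v) → σ i x y ∧ ¬ τ i x y := fun i => by
    by_cases h : ∃ u v, σ i u v ∧ ¬ τ i u v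
    · obtain ⟨u, v, huv⟩ := h
      exact ⟨u, v, fun _ => huv⟩
    · exact ⟨1, 1, fun h' => absurd h' h⟩
  choose a b hab using hex
  have h1 : prodCon D σ a b := Filter.mem_of_superset hS fun i hi => (hab i hi).1
  have h2 : prodCon D τ a b := heq ▸ h1
  have : (∅ : Set I) ∈ D := by
    refine Filter.mem_of_superset (Filter.inter_mem hS h2) fun i hi => ?_
    exact absurd hi.2 (hab i hi.1).2
  exact D.toFilter.empty_notMem this

/-- `Π_D α = Π_D β` iff `{i | α i = β i} ∈ D` (injectivity part of the embedding theorem). -/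
theorem prodCon_eq_iff {I : Type*} [Nonempty I] (D : Ultrafilter I) (M : I → Type*)
    [∀ i, Monoid (M i)] (α β : ∀ i, Con (M i)) :
    prodCon D α = prodCon D β ↔ {i | α i = β i} ∈ D := by
  constructor
  · intro h
    by_contra hne
    have hc : {i | α i = β i}ᶜ ∈ D := Ultrafilter.compl_mem_iff_notMem.2 hne
    have hsub : {i | α i = β i}ᶜ ⊆
        {i | ∃ x y, α i x y ∧ ¬ β i x y} ∪ {i | ∃ x y, β i x y ∧ ¬ α i x y} := by
      intro i hi
      by_contra hcon
      simp only [Set.mem_union, not_or] at hcon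
      obtain ⟨h1, h2⟩ := hcon
      exact hi (Con.ext fun x y => ⟨fun hx => by_contra fun hb => h1 ⟨x, y, hx, hb⟩,
        fun hx => by_contra fun hb => h2 ⟨x, y, hx, hb⟩⟩)
    have := Filter.mem_of_superset hc hsub
    rcases (Ultrafilter.union_mem_iff).1 this with h' | h'
    · exact prodCon_ne_aux D α β h' h
    · exact prodCon_ne_aux D β α h' h.symm
  · intro h
    apply Con.ext
    intro x y
    constructor
    · intro hx
      refine Filter.mem_of_superset (Filter.inter_mem h hx) fun i hi => ?_
      have he : α i = β i := hi.1
      have hx' : α i (x i) (y i) := hi.2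
      show (β i) (x i) (y i)
      exact he ▸ hx'
    · intro hx
      refine Filter.mem_of_superset (Filter.inter_mem h hx) fun i hi => ?_
      have he : α i = β i := hi.1
      have hx' : β i (x i) (y i) := hi.2
      show (α i) (x i) (y i)
      exact he.symm ▸ hx'
end

section
/- Let I be a nonempty set, D an ultrafilter on I, (M i)_{i∈I} a family of monoids, and σ i a congruence on M i for each i. Let D* be the ultraproduct congruence on Π_{i∈I} M i, let Π_D σ be the congruence on Π_{i∈I} M i relating a, b iff {i | σ i (a i) (b i)} ∈ D (so D* ≤ Π_D σ), and let c be the congruence on the ultraproduct Π_D(M i) := (Π M i) ⧸ D* induced by Π_D σ via the correspondence theorem (the image of Π_D σ under the surjective quotient homomorphism, i.e., c relates the D*-classes of a and b iff Π_D σ relates a and b). Then the quotient monoid (Π_D(M i)) ⧸ c is isomorphic as a monoid to the ultraproduct Π_D(M i ⧸ σ i) := (Π_{i∈I} (M i ⧸ σ i)) ⧸ D*. -/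
/-- Theorem 2 (for monoids): if `c` is the congruence induced on the ultraproduct
`(Π i, M i) ⧸ D*` by `Π_D σ` via the correspondence theorem, then the quotient of the
ultraproduct by `c` is isomorphic to the ultraproduct of the quotient monoids. -/
theorem quotient_induced_iso_ultraproduct {I : Type*} [Nonempty I] (D : Ultrafilter I)
    (M : I → Type*) [∀ i, Monoid (M i)] (σ : ∀ i, Con (M i))
    (c : Con (ultraCon D M).Quotient)
    (hc : ∀ a b : ∀ i, M i,
      c (a : (ultraCon D M).Quotient) (b : (ultraCon D M).Quotient) ↔ prodCon D σ a b) :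
    Nonempty (c.Quotient ≃* (ultraCon D (fun i => (σ i).Quotient)).Quotient) := by

  -- φ : Π M i →* c.Quotient
  classical
  let φ : (∀ i, M i) →* c.Quotient := c.mk'.comp (ultraCon D M).mk'
  have hφsurj : Function.Surjective φ := by
    intro x
    obtain ⟨y, rfl⟩ := c.mk'_surjective x
    obtain ⟨a, rfl⟩ := (ultraCon D M).mk'_surjective y
    exact ⟨a, rfl⟩
  have hkerφ : Con.ker φ = prodCon D σ := by
    ext a b
    show φ a = φ b ↔ _
    rw [← hc a b]
    exact c.eq
  -- ψ : Π M i →* target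
  let ψ : (∀ i, M i) →* (ultraCon D (fun i => (σ i).Quotient)).Quotient :=
    (ultraCon D (fun i => (σ i).Quotient)).mk'.comp
      (Pi.monoidHom fun i => ((σ i).mk').comp (Pi.evalMonoidHom M i))
  have hψsurj : Function.Surjective ψ := by
    intro x
    obtain ⟨y, rfl⟩ := (ultraCon D (fun i => (σ i).Quotient)).mk'_surjective x
    refine ⟨fun i => ((σ i).mk'_surjective (y i)).choose, ?_⟩
    show (ultraCon D (fun i => (σ i).Quotient)).mk' _ = _
    congr 1
    funext i
    exact ((σ i).mk'_surjective (y i)).choose_spec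
  have hkerψ : Con.ker ψ = prodCon D σ := by
    ext a b
    show ((fun i => ((a i : (σ i).Quotient))) : (ultraCon D (fun i => (σ i).Quotient)).Quotient)
        = ((fun i => ((b i : (σ i).Quotient))) : (ultraCon D (fun i => (σ i).Quotient)).Quotient) ↔ _
    rw [Con.eq]
    show {i | (σ i).mk' (a i) = (σ i).mk' (b i)} ∈ D ↔ {i | σ i (a i) (b i)} ∈ D
    constructor
    · exact fun h => Filter.mem_of_superset h fun i hi => (Con.eq _).mp hi
    · exact fun h => Filter.mem_of_superset h fun i hi => (Con.eq _).mpr hi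
  exact ⟨((Con.quotientKerEquivOfSurjective φ hφsurj).symm.trans
      (Con.congr (MulEquiv.refl _) (by rw [hkerφ.trans hkerψ.symm]; ext; rfl))).trans
      (Con.quotientKerEquivOfSurjective ψ hψsurj)⟩
end

section
/- Let I be a nonempty set, D an ultrafilter on I, A a monoid, and σ i a congruence on A for each i ∈ I. Then the congruence r on A defined by r a b ↔ {i ∈ I | σ i a b} ∈ D equals the lattice supremum ⨆_{K ∈ D} ⨅_{k ∈ K} σ k taken in the complete lattice of congruences on A; that is, the supremum of the congruences ⨅_{k∈K} σ k over all sets K in the ultrafilter D is given pointwise by: a and b are related iff {i | σ i a b} ∈ D. -/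
/-- The congruence `r` on a monoid `A` induced by a family `σ : I → Con A` of congruences
and an ultrafilter `D` on `I`: it relates `a` and `b` iff `{i | σ i a b} ∈ D`. -/
def rCon {I : Type*} (D : Ultrafilter I) {A : Type*} [Monoid A] (σ : I → Con A) : Con A where
  r a b := {i | σ i a b} ∈ D
  iseqv := by
    refine ⟨fun a => ?_, fun h => ?_, fun h1 h2 => ?_⟩
    · exact Filter.mem_of_superset Filter.univ_mem fun i _ => (σ i).refl _
    · exact Filter.mem_of_superset h fun i hi => (σ i).symm hi
    · exact Filter.mem_of_superset (Filter.inter_mem h1 h2) fun i hi => (σ i).trans hi.1 hi.2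
  mul' := fun h1 h2 =>
    Filter.mem_of_superset (Filter.inter_mem h1 h2) fun i hi => (σ i).mul hi.1 hi.2

lemma iInf2_iff {A : Type*} [Monoid A] {I : Type*} (K : Set I) (σ : I → Con A) (a b : A) :
    (⨅ k ∈ K, σ k) a b ↔ ∀ k ∈ K, σ k a b := by
  simp only [Con.coe_iInf, iInf_apply, iInf_Prop_eq]

/-- Theorem 3 (for monoids): the congruence relating `a, b` iff `{i | σ i a b} ∈ D` equals
`⨆ K ∈ D, ⨅ k ∈ K, σ k` in the complete lattice of congruences on `A`. -/
theorem rCon_eq_iSup_iInf {I : Type*} [Nonempty I] (D : Ultrafilter I) (A : Type*) [Monoid A]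
    (σ : I → Con A) :
    rCon D σ = ⨆ K ∈ D, ⨅ k ∈ K, σ k := by
  apply le_antisymm
  · rw [Con.le_def]
    intro a b h
    have h1 : (⨅ k ∈ {i | σ i a b}, σ k) a b := (iInf2_iff _ _ _ _).2 fun k hk => hk
    exact le_iSup₂ (f := fun K (_ : K ∈ D) => ⨅ k ∈ K, σ k) _ h h1
  · refine iSup₂_le fun K hK => ?_
    rw [Con.le_def]
    intro a b h
    exact Filter.mem_of_superset hK fun k hk => (iInf2_iff K σ a b).1 h k hk
end

section
/- Let I be a nonempty set, D an ultrafilter on I, and A a monoid, and σ i a congruence on A for each i ∈ I. Let Π_D σ be the congruence on the direct power Π_{i∈I} A (with A in every coordinate) relating a, b iff {i | σ i (a i) (b i)} ∈ D, and let ξ : A → Π_{i∈I} A be the diagonal monoid homomorphism sending a to the constant family with value a. Then the comap (pullback) of Π_D σ along ξ equals ⨆_{K ∈ D} ⨅_{k ∈ K} σ k in the complete lattice of congruences on A; equivalently, the restriction of the congruence Π_D σ to the diagonally embedded copy of A is ⨆_{K∈D} ⨅_{k∈K} σ k. -/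
/-- Theorem 3 (for monoids): the restriction (comap along the diagonal embedding
`ξ : A →* Π i, A`) of the congruence `Π_D σ` on the direct power `Π i, A` equals
`⨆ K ∈ D, ⨅ k ∈ K, σ k` in the complete lattice of congruences on `A`. -/
theorem comap_prodCon_diagonal {I : Type*} [Nonempty I] (D : Ultrafilter I) (A : Type*)
    [Monoid A] (σ : I → Con A) :
    Con.comap (⇑(Pi.monoidHom (fun _ : I => MonoidHom.id A)))
        (map_mul (Pi.monoidHom (fun _ : I => MonoidHom.id A)))
        (prodCon D (M := fun _ : I => A) σ) =
      ⨆ K ∈ D, ⨅ k ∈ K, σ k := by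
  have key : ∀ (K : Set I) (x y : A), (⨅ k ∈ K, σ k) x y ↔ ∀ k ∈ K, σ k x y := by
    intro K x y
    simp only [Con.coe_iInf, iInf_apply, iInf_Prop_eq]
  apply le_antisymm
  · intro x y hxy
    have hK : {i | σ i x y} ∈ D := hxy
    have h1 : (⨅ k ∈ {i : I | σ i x y}, σ k) x y := (key _ x y).mpr fun k hk => hk
    exact le_iSup₂ (f := fun K (_ : K ∈ D) => ⨅ k ∈ K, σ k) _ hK h1
  · refine iSup₂_le fun K hK x y hxy => ?_
    exact Filter.mem_of_superset hK fun k hk => (key K x y).mp hxy k hk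
end
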